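/- Let T be a tree with two adjacent vertices α, β, and consider the arboreal singularity L_T. Points of L_T(α) and L_T(β) are identified in L_T precisely when x_β(α) = x_α(β) ≥ 0 and x_γ(α) = x_γ(β) for all γ ≠ α, β. More generally, for α, β at distance k joined by the minimal path γ_0 = α, γ_1, …, γ_k = β, the identification of L_T(α) with L_T(β) inside L_T holds precisely when x_{γ_1}(α) = x_α(β), x_{γ_2}(α) = x_{γ_1}(β), …, x_β(α) = x_{γ_{k−1}}(β) ≥ 0, and x_γ(α) = x_γ(β) for all γ not on the path. -/

import Mathlib

/-- The basic gluing relation for the arboreal singularity of a graph `G`. -/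
def baseRel {V : Type*} (G : SimpleGraph V) :
    (Σ _ : V, V → ℝ) → (Σ _ : V, V → ℝ) → Prop := fun a b =>
  (a.1 = b.1 ∧ ∀ γ, γ ≠ a.1 → a.2 γ = b.2 γ) ∨
  (G.Adj a.1 b.1 ∧ a.2 b.1 = b.2 a.1 ∧ 0 ≤ a.2 b.1 ∧
    ∀ γ, γ ≠ a.1 → γ ≠ b.1 → a.2 γ = b.2 γ)

namespace Stmt4Aux

open SimpleGraph Walk

variable {V : Type*} {G : SimpleGraph V}

/-- The gluing condition along a walk. -/
def Cond {α β : V} (p : G.Walk α β) (x y : V → ℝ) : Prop :=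
  (∀ i < p.length, x (p.getVert (i + 1)) = y (p.getVert i) ∧ 0 ≤ x (p.getVert (i + 1))) ∧
  ∀ γ, γ ∉ p.support → x γ = y γ

/-- The path-gluing relation. -/
def Rel (G : SimpleGraph V) (a b : Σ _ : V, V → ℝ) : Prop :=
  ∃ p : G.Walk a.1 b.1, p.IsPath ∧ Cond p a.2 b.2

lemma getVert_mem_support' {α β : V} (p : G.Walk α β) {i : ℕ} (hi : i ≤ p.length) :
    p.getVert i ∈ p.support :=
  Walk.mem_support_iff_exists_getVert.2 ⟨i, rfl, hi⟩

lemma getVert_ne_last {α β : V} (p : G.Walk α β) (hp : p.IsPath) :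
    ∀ i < p.length, p.getVert i ≠ β := by
  induction p with
  | nil => intro i hi; simp at hi
  | @cons u v w h p ih =>
    intro i hi
    cases i with
    | zero =>
      simp only [Walk.getVert_zero]
      rintro rfl
      exact ((Walk.cons_isPath_iff h p).1 hp).2 p.end_mem_support
    | succ i =>
      rw [Walk.getVert_cons_succ]
      exact ih hp.of_cons i (by simpa [Walk.length_cons] using hi)

lemma cond_reverse {α β : V} {p : G.Walk α β} {x y : V → ℝ} (hc : Cond p x y) :
    Cond p.reverse y x := by
  constructor
  · intro i hi
    rw [Walk.length_reverse] at hi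
    rw [Walk.getVert_reverse, Walk.getVert_reverse]
    set j := p.length - (i + 1) with hj
    have hjl : j < p.length := by omega
    have h1 : p.length - i = j + 1 := by omega
    rw [h1]
    obtain ⟨he, hpos⟩ := hc.1 j hjl
    exact ⟨he.symm, he ▸ hpos⟩
  · intro γ hγ
    rw [Walk.support_reverse, List.mem_reverse] at hγ
    exact (hc.2 γ hγ).symm

lemma quot_of_cond {α β : V} (p : G.Walk α β) (hp : p.IsPath) (x y : V → ℝ)
    (hc : Cond p x y) :
    Quot.mk (baseRel G) ⟨α, x⟩ = Quot.mk (baseRel G) ⟨β, y⟩ := by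
  classical
  induction p generalizing x y with
  | nil =>
    apply Quot.sound
    exact Or.inl ⟨rfl, fun γ hγ => hc.2 γ (by simp [hγ])⟩
  | @cons u v w h p ih =>
    have h10 : (Walk.cons h p).getVert 1 = v := by
      rw [Walk.getVert_cons_succ, Walk.getVert_zero]
    obtain ⟨he0, hpos0⟩ := hc.1 0 (by simp [Walk.length_cons])
    rw [h10] at he0 hpos0
    rw [Walk.getVert_zero] at he0
    set x₁ : V → ℝ := Function.update x u (x v) with hx₁
    have step1 : baseRel G ⟨u, x⟩ ⟨v, x₁⟩ := by
      refine Or.inr ⟨h, ?_, hpos0, ?_⟩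
      · simp [hx₁]
      · intro γ hγu hγv
        simp [hx₁, Function.update_of_ne hγu]
    have hu_not : u ∉ p.support := ((Walk.cons_isPath_iff h p).1 hp).2
    have step2 : Cond p x₁ y := by
      constructor
      · intro i hi
        have hne : p.getVert (i + 1) ≠ u := fun hcon =>
          hu_not (hcon ▸ getVert_mem_support' p (by omega))
        rw [hx₁, Function.update_of_ne hne]
        have := hc.1 (i + 1) (by simpa [Walk.length_cons] using Nat.succ_lt_succ hi)
        rwa [Walk.getVert_cons_succ, Walk.getVert_cons_succ] at this
      · intro γ hγ
        by_cases hγu : γ = u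
        · subst hγu
          simp [hx₁, he0]
        · rw [hx₁, Function.update_of_ne hγu]
          exact hc.2 γ (by simp [Walk.support_cons, hγu, hγ])
    calc Quot.mk (baseRel G) ⟨u, x⟩ = Quot.mk (baseRel G) ⟨v, x₁⟩ := Quot.sound step1
      _ = Quot.mk (baseRel G) ⟨w, y⟩ := ih hp.of_cons x₁ y step2


/-- Appending one edge at the end of a gluing path. -/
lemma edge_append [DecidableEq V] (hU : ∀ {v w : V} (p q : G.Walk v w), p.IsPath → q.IsPath → p = q)
    {α β β₁ : V} (e : G.Adj β β₁) {x y : V → ℝ}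
    (p : G.Walk α β) (hp : p.IsPath) (hc : Cond p x y) (h0 : 0 ≤ y β₁) :
    ∃ q : G.Walk α β₁, q.IsPath ∧ Cond q x (Function.update y β (y β₁)) := by
  classical
  set y₁ : V → ℝ := Function.update y β (y β₁) with hy₁
  by_cases hm : β₁ ∈ p.support
  · -- β₁ is the penultimate vertex of p
    have hsingle : (Walk.cons e.symm Walk.nil : G.Walk β₁ β).IsPath := by
      rw [Walk.cons_isPath_iff]
      exact ⟨Walk.IsPath.nil, by simp [e.ne']⟩
    have hd : p.dropUntil β₁ hm = Walk.cons e.symm Walk.nil :=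
      hU _ _ (hp.dropUntil hm) hsingle
    set p'' := p.takeUntil β₁ hm with hp''def
    have hspec : p''.append (Walk.cons e.symm Walk.nil) = p := by
      rw [← hd, hp''def, Walk.take_spec]
    have hlen : p.length = p''.length + 1 := by
      rw [← hspec, Walk.length_append]; simp
    have hget : ∀ j ≤ p''.length, p.getVert j = p''.getVert j := by
      intro j hj
      rw [← hspec, Walk.getVert_append]
      split_ifs with hlt
      · rfl
      · have hj' : j = p''.length := by omega
        subst hj'
        simp [Walk.getVert_length]
    refine ⟨p'', hp.takeUntil hm, ?_, ?_⟩
    · intro i hi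
      have h1 : p''.getVert (i + 1) = p.getVert (i + 1) := (hget (i + 1) (by omega)).symm
      have h2 : p''.getVert i = p.getVert i := (hget i (by omega)).symm
      have hne : p.getVert i ≠ β := getVert_ne_last p hp i (by omega)
      rw [h1, h2, hy₁, Function.update_of_ne hne]
      exact hc.1 i (by omega)
    · intro γ hγ
      by_cases hγβ : γ = β
      · rw [hγβ, hy₁, Function.update_self]
        have hlast : p.getVert (p''.length + 1) = β := by
          rw [← hlen, Walk.getVert_length]
        have hpen : p.getVert p''.length = β₁ := by
          rw [hget p''.length le_rfl, Walk.getVert_length]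
        obtain ⟨he, -⟩ := hc.1 p''.length (by omega)
        rw [hlast, hpen] at he
        exact he
      · have hγβ₁ : γ ≠ β₁ := fun hcon => hγ (hcon ▸ p''.end_mem_support)
        have hγp : γ ∉ p.support := by
          rw [← hspec, Walk.mem_support_append_iff]
          push_neg
          exact ⟨hγ, by simp [Walk.support_cons, Walk.support_nil, hγβ, hγβ₁]⟩
        rw [hy₁, Function.update_of_ne hγβ]
        exact hc.2 γ hγp
  · -- extend p by the new edge
    refine ⟨p.concat e, ?_, ?_, ?_⟩
    · rw [← Walk.isPath_reverse_iff, Walk.reverse_concat, Walk.cons_isPath_iff]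
      refine ⟨hp.reverse, ?_⟩
      rwa [Walk.support_reverse, List.mem_reverse]
    · have hget : ∀ j ≤ p.length, (p.concat e).getVert j = p.getVert j := by
        intro j hj
        rw [Walk.concat_eq_append, Walk.getVert_append]
        split_ifs with hlt
        · rfl
        · have hj' : j = p.length := by omega
          subst hj'
          simp [Walk.getVert_length]
      have hlast : (p.concat e).getVert (p.length + 1) = β₁ := by
        have := (p.concat e).getVert_length
        rwa [Walk.length_concat] at this
      intro i hi
      rw [Walk.length_concat] at hi
      rcases Nat.lt_or_ge i p.length with hlt | hge
      · have hne : p.getVert i ≠ β := getVert_ne_last p hp i hlt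
        rw [hget (i + 1) (by omega), hget i (by omega), hy₁, Function.update_of_ne hne]
        exact hc.1 i hlt
      · have hi' : i = p.length := by omega
        subst hi'
        rw [hlast, hget p.length le_rfl, Walk.getVert_length, hy₁, Function.update_self]
        have hxβ₁ : x β₁ = y β₁ := hc.2 β₁ hm
        exact ⟨hxβ₁, hxβ₁ ▸ h0⟩
    · intro γ hγ
      rw [Walk.support_concat, List.mem_append] at hγ
      push_neg at hγ
      obtain ⟨hγp, hγβ₁⟩ := hγ
      have hγβ : γ ≠ β := fun hcon => hγp (hcon ▸ p.end_mem_support)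
      rw [hy₁, Function.update_of_ne hγβ]
      exact hc.2 γ hγp

lemma trans_aux (hU : ∀ {v w : V} (p q : G.Walk v w), p.IsPath → q.IsPath → p = q)
    {β δ : V} (q : G.Walk β δ) (hq : q.IsPath) :
    ∀ {α : V} (x y z : V → ℝ) (p : G.Walk α β), p.IsPath → Cond p x y → Cond q y z →
      ∃ r : G.Walk α δ, r.IsPath ∧ Cond r x z := by
  classical
  induction q with
  | nil =>
    intro α x y z p hp hcp hcq
    refine ⟨p, hp, ?_, ?_⟩
    · intro i hi
      rw [← hcq.2 (p.getVert i) (by simpa using getVert_ne_last p hp i hi)]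
      exact hcp.1 i hi
    · intro γ hγ
      rw [hcp.2 γ hγ]
      refine hcq.2 γ ?_
      simp only [Walk.support_nil, List.mem_singleton]
      intro hcon
      exact hγ (hcon ▸ p.end_mem_support)
  | @cons u v w e q' ih =>
    intro α x y z p hp hcp hcq
    have h10 : (Walk.cons e q').getVert 1 = v := by
      rw [Walk.getVert_cons_succ, Walk.getVert_zero]
    obtain ⟨he0, hpos0⟩ := hcq.1 0 (by simp [Walk.length_cons])
    rw [h10] at he0 hpos0
    rw [Walk.getVert_zero] at he0
    obtain ⟨q₁, hq₁, hcq₁⟩ := edge_append hU e p hp hcp hpos0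
    set y₁ : V → ℝ := Function.update y u (y v) with hy₁
    have hu_not : u ∉ q'.support := ((Walk.cons_isPath_iff e q').1 hq).2
    have hcond' : Cond q' y₁ z := by
      constructor
      · intro i hi
        have hne : q'.getVert (i + 1) ≠ u := fun hcon =>
          hu_not (hcon ▸ getVert_mem_support' q' (by omega))
        rw [hy₁, Function.update_of_ne hne]
        have := hcq.1 (i + 1) (by simpa [Walk.length_cons] using Nat.succ_lt_succ hi)
        rwa [Walk.getVert_cons_succ, Walk.getVert_cons_succ] at this
      · intro γ hγ
        by_cases hγu : γ = u
        · subst hγu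
          simp [hy₁, he0]
        · rw [hy₁, Function.update_of_ne hγu]
          exact hcq.2 γ (by simp [Walk.support_cons, hγu, hγ])
    exact ih hq.of_cons x y₁ z q₁ hq₁ hcq₁ hcond'

lemma rel_of_eqvGen (hU : ∀ {v w : V} (p q : G.Walk v w), p.IsPath → q.IsPath → p = q)
    {a b : Σ _ : V, V → ℝ} (h : Relation.EqvGen (baseRel G) a b) : Rel G a b := by
  induction h with
  | rel a b hab =>
    obtain ⟨α, x⟩ := a
    obtain ⟨β, y⟩ := b
    rcases hab with ⟨h1, h2⟩ | ⟨h1, h2, h3, h4⟩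
    · dsimp at h1 h2
      subst h1
      exact ⟨Walk.nil, Walk.IsPath.nil,
        fun i hi => by simp at hi,
        fun γ hγ => h2 γ (by simpa using hγ)⟩
    · dsimp at h1 h2 h3 h4
      refine ⟨Walk.cons h1 Walk.nil, ?_, ?_, ?_⟩
      · rw [Walk.cons_isPath_iff]
        exact ⟨Walk.IsPath.nil, by simp [h1.ne]⟩
      · intro i hi
        simp only [Walk.length_cons, Walk.length_nil] at hi
        have hi0 : i = 0 := by omega
        subst hi0
        have hg1 : (Walk.cons h1 Walk.nil : G.Walk α β).getVert 1 = β := by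
          rw [Walk.getVert_cons_succ, Walk.getVert_zero]
        have hg0 : (Walk.cons h1 Walk.nil : G.Walk α β).getVert 0 = α :=
          Walk.getVert_zero _
        rw [hg1, hg0]
        exact ⟨h2, h3⟩
      · intro γ hγ
        simp [Walk.support_cons, Walk.support_nil] at hγ
        exact h4 γ hγ.1 hγ.2
  | refl a =>
    exact ⟨Walk.nil, Walk.IsPath.nil, fun i hi => by simp at hi, fun γ hγ => rfl⟩
  | symm a b hab ih =>
    obtain ⟨p, hp, hc⟩ := ih
    exact ⟨p.reverse, hp.reverse, cond_reverse hc⟩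
  | trans a b c hab hbc ih1 ih2 =>
    obtain ⟨p, hp, hcp⟩ := ih1
    obtain ⟨q, hq, hcq⟩ := ih2
    exact trans_aux hU q hq a.2 b.2 c.2 p hp hcp hcq

end Stmt4Aux

theorem stmt4 {V : Type*} [Fintype V] (G : SimpleGraph V) (hG : G.IsTree) :
    (∀ (α β : V) (x y : V → ℝ), G.Adj α β →
      (Quot.mk (baseRel G) ⟨α, x⟩ = Quot.mk (baseRel G) ⟨β, y⟩ ↔
        (x β = y α ∧ 0 ≤ x β ∧ ∀ γ, γ ≠ α → γ ≠ β → x γ = y γ))) ∧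
    (∀ (α β : V) (p : G.Walk α β), p.IsPath → ∀ x y : V → ℝ,
      (Quot.mk (baseRel G) ⟨α, x⟩ = Quot.mk (baseRel G) ⟨β, y⟩ ↔
        ((∀ i < p.length,
            x (p.getVert (i + 1)) = y (p.getVert i) ∧ 0 ≤ x (p.getVert (i + 1))) ∧
          ∀ γ, γ ∉ p.support → x γ = y γ))) := by
  classical
  have hEU := (SimpleGraph.isTree_iff_existsUnique_path.mp hG).2
  have hU : ∀ {v w : V} (p q : G.Walk v w), p.IsPath → q.IsPath → p = q := by
    intro v w p q hp hq
    obtain ⟨r, -, hr⟩ := hEU v w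
    rw [hr p hp, hr q hq]
  have part2 : ∀ (α β : V) (p : G.Walk α β), p.IsPath → ∀ x y : V → ℝ,
      (Quot.mk (baseRel G) ⟨α, x⟩ = Quot.mk (baseRel G) ⟨β, y⟩ ↔
        Stmt4Aux.Cond p x y) := by
    intro α β p hp x y
    constructor
    · intro h
      obtain ⟨p₀, hp₀, hc₀⟩ := Stmt4Aux.rel_of_eqvGen hU (Quot.eqvGen_exact h)
      rwa [hU p₀ p hp₀ hp] at hc₀
    · exact Stmt4Aux.quot_of_cond p hp x y
  refine ⟨?_, fun α β p hp x y => part2 α β p hp x y⟩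
  intro α β x y hadj
  have hp : (SimpleGraph.Walk.cons hadj SimpleGraph.Walk.nil).IsPath := by
    rw [SimpleGraph.Walk.cons_isPath_iff]
    exact ⟨SimpleGraph.Walk.IsPath.nil, by simp [hadj.ne]⟩
  have hg1 : (SimpleGraph.Walk.cons hadj SimpleGraph.Walk.nil).getVert 1 = β := by
    rw [SimpleGraph.Walk.getVert_cons_succ, SimpleGraph.Walk.getVert_zero]
  have hg0 : (SimpleGraph.Walk.cons hadj SimpleGraph.Walk.nil).getVert 0 = α :=
    SimpleGraph.Walk.getVert_zero _
  rw [part2 α β _ hp x y]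
  constructor
  · intro h
    obtain ⟨h1, h2⟩ := h
    obtain ⟨he, h0⟩ := h1 0 (by simp)
    rw [hg1, hg0] at he
    rw [hg1] at h0
    exact ⟨he, h0, fun γ hγα hγβ => h2 γ (by
      simp [SimpleGraph.Walk.support_cons, SimpleGraph.Walk.support_nil, hγα, hγβ])⟩
  · rintro ⟨he, h0, hoff⟩
    refine ⟨?_, ?_⟩
    · intro i hi
      have hi0 : i = 0 := by
        simp only [SimpleGraph.Walk.length_cons, SimpleGraph.Walk.length_nil] at hi
        omega
      subst hi0
      rw [hg1, hg0]
      exact ⟨he, h0⟩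
    · intro γ hγ
      simp only [SimpleGraph.Walk.support_cons, SimpleGraph.Walk.support_nil,
        List.mem_cons, List.mem_singleton, not_or] at hγ
      exact hoff γ hγ.1 hγ.2.1
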